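/- Define $\mathcal{G}_\varphi(\epsilon_1,\epsilon_2,\epsilon_3) = \frac{1}{6}\sum_{\sigma \in S_3} H_\varphi(\epsilon_{\sigma(1)},\epsilon_{\sigma(2)},\epsilon_{\sigma(3)})\, \Phi(\epsilon_{\sigma(1)},\epsilon_{\sigma(2)},\epsilon_{\sigma(3)})$, where $H_\varphi(x,y,z) = \varphi(z) + \varphi(x+y-z) - \varphi(x) - \varphi(y)$ and $\Phi(x,y,z) = \min\{\sqrt{x}, \sqrt{y}, \sqrt{z}, \sqrt{(x+y-z)_+}\}$. If $\varphi : [0,\infty) \to \mathbb{R}$ is convex, then $\mathcal{G}_\varphi(\epsilon_1,\epsilon_2,\epsilon_3) \geq 0$ for all $\epsilon_1,\epsilon_2,\epsilon_3 > 0$; if $\varphi$ is concave, then $\mathcal{G}_\varphi \leq 0$. -/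
import Mathlib


/-- `Φ(x,y,z) = min{√x, √y, √z, √((x+y-z)₊)}`. -/
noncomputable def Phi3 (x y z : ℝ) : ℝ :=
  min (Real.sqrt x) (min (Real.sqrt y) (min (Real.sqrt z) (Real.sqrt (max (x + y - z) 0))))

/-- `H_φ(x,y,z) = φ(z) + φ(x+y-z) - φ(x) - φ(y)`. -/
def Hfun (φ : ℝ → ℝ) (x y z : ℝ) : ℝ := φ z + φ (x + y - z) - φ x - φ y

/-- The product `H_φ Φ`, taken to be `0` whenever `x + y - z < 0`. -/
noncomputable def HPhi (φ : ℝ → ℝ) (x y z : ℝ) : ℝ :=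
  if x + y - z < 0 then 0 else Hfun φ x y z * Phi3 x y z

/-- The symmetrized collision functional `𝓖_φ`. -/
noncomputable def Gfun (φ : ℝ → ℝ) (ε : Fin 3 → ℝ) : ℝ :=
  (1 / 6) * ∑ σ : Equiv.Perm (Fin 3), HPhi φ (ε (σ 0)) (ε (σ 1)) (ε (σ 2))

/-- auxiliary: sum over the six orderings -/
noncomputable def Ssum (φ : ℝ → ℝ) (x y z : ℝ) : ℝ :=
  HPhi φ x y z + HPhi φ y x z + HPhi φ x z y + HPhi φ z x y + HPhi φ y z x + HPhi φ z y x

lemma convex_pair {φ : ℝ → ℝ} (hφ : ConvexOn ℝ (Set.Ici 0) φ)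
    {s t u v : ℝ} (hs : 0 ≤ s) (hsu : s ≤ u) (hut : u ≤ t) (hsum : u + v = s + t) :
    φ u + φ v ≤ φ s + φ t := by
  rcases eq_or_lt_of_le (hsu.trans hut) with h | h
  · have hu : u = s := le_antisymm (h ▸ hut) hsu
    have hv : v = t := by linarith
    simp [hu, hv]
  · have hts : 0 < t - s := by linarith
    set θ := (t - u) / (t - s) with hθdef
    have hθ0 : 0 ≤ θ := div_nonneg (by linarith) hts.le
    have hθ1 : θ ≤ 1 := (div_le_one hts).2 (by linarith)
    have hsm : s ∈ Set.Ici (0:ℝ) := hs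
    have htm : t ∈ Set.Ici (0:ℝ) := by simp only [Set.mem_Ici]; linarith
    have hmul : θ * (t - s) = t - u := by
      rw [hθdef, div_mul_cancel₀ _ hts.ne']
    have hu' : θ * s + (1 - θ) * t = u := by linear_combination -hmul
    have hv' : (1 - θ) * s + θ * t = v := by linear_combination hmul - hsum
    have hb0 : (0:ℝ) ≤ 1 - θ := by linarith
    have hab1 : θ + (1 - θ) = 1 := by ring
    have hab2 : (1 - θ) + θ = 1 := by ring
    have h1 := hφ.2 hsm htm hθ0 hb0 hab1
    have h2 := hφ.2 hsm htm hb0 hθ0 hab2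
    simp only [smul_eq_mul] at h1 h2
    rw [hu'] at h1
    rw [hv'] at h2
    calc φ u + φ v ≤ θ * φ s + (1 - θ) * φ t + ((1 - θ) * φ s + θ * φ t) :=
          add_le_add h1 h2
      _ = φ s + φ t := by ring

lemma Phi3_nonneg (x y z : ℝ) : 0 ≤ Phi3 x y z :=
  le_min (Real.sqrt_nonneg _) (le_min (Real.sqrt_nonneg _)
    (le_min (Real.sqrt_nonneg _) (Real.sqrt_nonneg _)))

lemma HPhi_comm (φ : ℝ → ℝ) (x y z : ℝ) : HPhi φ x y z = HPhi φ y x z := by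
  unfold HPhi Hfun Phi3
  rw [add_comm x y, min_left_comm (Real.sqrt x)]
  ring_nf

lemma HPhi_neg (φ : ℝ → ℝ) (x y z : ℝ) :
    HPhi (fun t => -φ t) x y z = -HPhi φ x y z := by
  unfold HPhi Hfun
  split <;> ring

lemma Gfun_neg (φ : ℝ → ℝ) (ε : Fin 3 → ℝ) :
    Gfun (fun t => -φ t) ε = -Gfun φ ε := by
  unfold Gfun
  simp only [HPhi_neg, Finset.sum_neg_distrib]
  ring

/-- core lemma for sorted triples -/
lemma Ssum_sorted {φ : ℝ → ℝ} (hφ : ConvexOn ℝ (Set.Ici 0) φ)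
    {a b c : ℝ} (ha : 0 < a) (hab : a ≤ b) (hbc : b ≤ c) :
    0 ≤ Ssum φ a b c := by
  have hb : 0 < b := ha.trans_le hab
  have hc : 0 < c := hb.trans_le hbc
  have hS : Ssum φ a b c = 2 * (HPhi φ a b c + (HPhi φ a c b + HPhi φ b c a)) := by
    unfold Ssum
    rw [HPhi_comm φ b a c, HPhi_comm φ c a b, HPhi_comm φ c b a]
    ring
  -- first term
  have h1 : 0 ≤ HPhi φ a b c := by
    unfold HPhi
    split
    · exact le_refl 0
    · rename_i hnn
      push_neg at hnn
      have hH : 0 ≤ Hfun φ a b c := by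
        have := convex_pair hφ (s := a + b - c) (t := c) (u := a) (v := b)
          (by linarith) (by linarith) (by linarith) (by ring)
        unfold Hfun; linarith
      exact mul_nonneg hH (Phi3_nonneg a b c)
  -- the remaining pair
  have hPa : Phi3 a c b = Real.sqrt a := by
    unfold Phi3
    rw [min_eq_left]
    exact le_min (Real.sqrt_le_sqrt (hab.trans hbc))
      (le_min (Real.sqrt_le_sqrt hab)
        (Real.sqrt_le_sqrt (le_max_of_le_left (by linarith))))
  have hPb : Phi3 b c a = Real.sqrt a := by
    unfold Phi3
    rw [min_eq_left (Real.sqrt_le_sqrt (le_max_of_le_left (by linarith : a ≤ b + c - a))),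
      min_eq_right (Real.sqrt_le_sqrt (hab.trans hbc)),
      min_eq_right (Real.sqrt_le_sqrt hab)]
  have h2 : 0 ≤ HPhi φ a c b + HPhi φ b c a := by
    unfold HPhi
    rw [if_neg (by push_neg; linarith), if_neg (by push_neg; linarith), hPa, hPb]
    have hcp := convex_pair hφ (s := a + c - b) (t := b + c - a) (u := c) (v := c)
      (by linarith) (by linarith) (by linarith) (by ring)
    have hHsum : 0 ≤ Hfun φ a c b + Hfun φ b c a := by
      unfold Hfun; linarith
    calc (0:ℝ) ≤ (Hfun φ a c b + Hfun φ b c a) * Real.sqrt a :=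
          mul_nonneg hHsum (Real.sqrt_nonneg a)
      _ = Hfun φ a c b * Real.sqrt a + Hfun φ b c a * Real.sqrt a := by ring
  rw [hS]
  linarith

lemma Ssum_nonneg {φ : ℝ → ℝ} (hφ : ConvexOn ℝ (Set.Ici 0) φ)
    {x y z : ℝ} (hx : 0 < x) (hy : 0 < y) (hz : 0 < z) :
    0 ≤ Ssum φ x y z := by
  rcases le_total x y with h1 | h1
  · rcases le_total y z with h2 | h2
    · exact Ssum_sorted hφ hx h1 h2
    · rcases le_total x z with h3 | h3
      · have h := Ssum_sorted hφ hx h3 h2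
        have e : Ssum φ x y z = Ssum φ x z y := by unfold Ssum; ring
        linarith
      · have h := Ssum_sorted hφ hz h3 h1
        have e : Ssum φ x y z = Ssum φ z x y := by unfold Ssum; ring
        linarith
  · rcases le_total x z with h2 | h2
    · have h := Ssum_sorted hφ hy h1 h2
      have e : Ssum φ x y z = Ssum φ y x z := by unfold Ssum; ring
      linarith
    · rcases le_total y z with h3 | h3
      · have h := Ssum_sorted hφ hy h3 h2
        have e : Ssum φ x y z = Ssum φ y z x := by unfold Ssum; ring
        linarith
      · have h := Ssum_sorted hφ hz h3 h1
        have e : Ssum φ x y z = Ssum φ z y x := by unfold Ssum; ring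
        linarith

lemma Gfun_eq_Ssum (φ : ℝ → ℝ) (ε : Fin 3 → ℝ) :
    Gfun φ ε = (1 / 6) * Ssum φ (ε 0) (ε 1) (ε 2) := by
  unfold Gfun
  have h : (Finset.univ : Finset (Equiv.Perm (Fin 3))) =
      {1, Equiv.swap 0 1, Equiv.swap 0 2, Equiv.swap 1 2, finRotate 3, (finRotate 3)⁻¹} := by
    decide
  rw [h, Finset.sum_insert (by decide), Finset.sum_insert (by decide),
    Finset.sum_insert (by decide), Finset.sum_insert (by decide),
    Finset.sum_insert (by decide), Finset.sum_singleton]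
  simp only [Equiv.Perm.one_apply,
    show (Equiv.swap (0:Fin 3) 1) 0 = 1 by decide,
    show (Equiv.swap (0:Fin 3) 1) 1 = 0 by decide,
    show (Equiv.swap (0:Fin 3) 1) 2 = 2 by decide,
    show (Equiv.swap (0:Fin 3) 2) 0 = 2 by decide,
    show (Equiv.swap (0:Fin 3) 2) 1 = 1 by decide,
    show (Equiv.swap (0:Fin 3) 2) 2 = 0 by decide,
    show (Equiv.swap (1:Fin 3) 2) 0 = 0 by decide,
    show (Equiv.swap (1:Fin 3) 2) 1 = 2 by decide,
    show (Equiv.swap (1:Fin 3) 2) 2 = 1 by decide,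
    show (finRotate 3) (0:Fin 3) = 1 by decide,
    show (finRotate 3) (1:Fin 3) = 2 by decide,
    show (finRotate 3) (2:Fin 3) = 0 by decide,
    show (finRotate 3)⁻¹ (0:Fin 3) = 2 by decide,
    show (finRotate 3)⁻¹ (1:Fin 3) = 0 by decide,
    show (finRotate 3)⁻¹ (2:Fin 3) = 1 by decide]
  unfold Ssum
  ring

theorem stmt8 (φ : ℝ → ℝ) (ε : Fin 3 → ℝ) (hε : ∀ i, 0 < ε i) :
    (ConvexOn ℝ (Set.Ici 0) φ → 0 ≤ Gfun φ ε) ∧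
    (ConcaveOn ℝ (Set.Ici 0) φ → Gfun φ ε ≤ 0) := by
  have key : ∀ ψ : ℝ → ℝ, ConvexOn ℝ (Set.Ici 0) ψ → 0 ≤ Gfun ψ ε := by
    intro ψ hψ
    rw [Gfun_eq_Ssum]
    have := Ssum_nonneg hψ (hε 0) (hε 1) (hε 2)
    linarith
  refine ⟨key φ, fun hconc => ?_⟩
  have hneg : ConvexOn ℝ (Set.Ici 0) (fun t => -φ t) := hconc.neg
  have h := key _ hneg
  rw [Gfun_neg] at h
  linarith
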